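/- Let u ∈ W^{1,p}(ℝ^d) with 1 ≤ p ≤ ∞. Then there exists a set E of Lebesgue measure zero such that |u(x) − u(y)| ≤ c·|x − y|·( M_{|∇u|}(x) + M_{|∇u|}(y) ) for all x, y ∈ ℝ^d \ E, where M_f denotes the Hardy–Littlewood maximal function of f and c = c(d) > 0. -/

import Mathlib

open MeasureTheory Metric Set
open scoped ENNReal NNReal

variable {d : ℕ}
local notation "E" => EuclideanSpace ℝ (Fin d)

-- Lemma 1: FTC inequality in ENNReal
lemma aux_ftc (g : ℝ → ℝ) (hg : Differentiable ℝ g) :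
    (‖g 1 - g 0‖₊ : ℝ≥0∞) ≤ ∫⁻ t in Icc (0:ℝ) 1, (‖deriv g t‖₊ : ℝ≥0∞) := by
  by_cases h : (∫⁻ t in Icc (0:ℝ) 1, (‖deriv g t‖₊ : ℝ≥0∞)) = ∞
  · simp [h]
  · have hmeas : Measurable (deriv g) := measurable_deriv g
    have hint : IntegrableOn (deriv g) (Icc (0:ℝ) 1) volume := by
      refine ⟨hmeas.aestronglyMeasurable, ?_⟩
      rw [HasFiniteIntegral]
      exact lt_top_iff_ne_top.2 h
    have hii : IntervalIntegrable (deriv g) volume 0 1 := by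
      apply MeasureTheory.IntegrableOn.intervalIntegrable
      rwa [Set.uIcc_of_le (zero_le_one)]
    have heq := intervalIntegral.integral_deriv_eq_sub (f := g)
      (fun x _ => hg.differentiableAt) hii
    rw [← heq, intervalIntegral.integral_of_le zero_le_one]
    calc (‖∫ t in Ioc (0:ℝ) 1, deriv g t‖₊ : ℝ≥0∞)
        ≤ ∫⁻ t in Ioc (0:ℝ) 1, (‖deriv g t‖₊ : ℝ≥0∞) :=
          enorm_integral_le_lintegral_enorm _
      _ ≤ ∫⁻ t in Icc (0:ℝ) 1, (‖deriv g t‖₊ : ℝ≥0∞) :=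
          lintegral_mono_set Ioc_subset_Icc_self

lemma aux_seg (u : (E) → ℝ) (hu : Differentiable ℝ u) (x z : E) :
    (‖u x - u z‖₊ : ℝ≥0∞) ≤
      ∫⁻ t in Icc (0:ℝ) 1, (‖fderiv ℝ u (x + t • (z - x))‖₊ : ℝ≥0∞) * (‖z - x‖₊ : ℝ≥0∞) := by
  set g : ℝ → ℝ := fun t => u (x + t • (z - x)) with hgdef
  have hline : ∀ t : ℝ, HasDerivAt (fun s : ℝ => x + s • (z - x)) (z - x) t := by
    intro t
    simpa using ((hasDerivAt_id t).smul_const (z - x)).const_add x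
  have hgd : ∀ t : ℝ, HasDerivAt g (fderiv ℝ u (x + t • (z - x)) (z - x)) t := by
    intro t
    exact (hu _).hasFDerivAt.comp_hasDerivAt t (hline t)
  have hgdiff : Differentiable ℝ g := fun t => (hgd t).differentiableAt
  have h01 : g 1 = u z := by simp [hgdef]
  have h00 : g 0 = u x := by simp [hgdef]
  have key := aux_ftc g hgdiff
  rw [h01, h00] at key
  have : (‖u x - u z‖₊ : ℝ≥0∞) = (‖u z - u x‖₊ : ℝ≥0∞) := by
    rw [← neg_sub, nnnorm_neg]
  rw [this]
  refine key.trans (lintegral_mono fun t => ?_)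
  rw [(hgd t).deriv]
  calc (‖fderiv ℝ u (x + t • (z - x)) (z - x)‖₊ : ℝ≥0∞)
      ≤ (‖fderiv ℝ u (x + t • (z - x))‖₊ * ‖z - x‖₊ : ℝ≥0) := by
        exact_mod_cast ENNReal.coe_le_coe.2 ((fderiv ℝ u (x + t • (z - x))).le_opNNNorm _)
    _ = _ := by push_cast; ring

-- translation: ∫⁻ in ball x r of H = ∫⁻ in ball 0 r of H(x + ·)
lemma aux_transl (H : (E) → ℝ≥0∞) (hH : Measurable H) (x : E) (r : ℝ) :
    ∫⁻ z in ball x r, H z = ∫⁻ w in ball (0 : E) r, H (x + w) := by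
  rw [← lintegral_indicator (measurableSet_ball) , ← lintegral_indicator (measurableSet_ball)]
  rw [← lintegral_add_left_eq_self (fun z => (ball x r).indicator H z) x]
  congr 1
  ext w
  by_cases hw : w ∈ ball (0 : E) r
  · rw [indicator_of_mem hw, indicator_of_mem]
    simpa [mem_ball, dist_eq_norm] using hw
  · rw [indicator_of_notMem hw, indicator_of_notMem]
    intro hc
    apply hw
    simpa [mem_ball, dist_eq_norm] using hc

-- Lemma 3: scaling
lemma aux_scale (F : (E) → ℝ≥0∞) (hF : Measurable F) (x : E) {t r : ℝ}
    (ht : 0 < t) :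
    ∫⁻ z in ball x r, F (x + t • (z - x)) =
      ENNReal.ofReal ((t ^ d)⁻¹) * ∫⁻ w in ball x (t * r), F w := by
  have hFz : Measurable fun z : E => F (x + t • (z - x)) :=
    hF.comp ((measurable_const.add ((measurable_id.sub measurable_const).const_smul t)))
  have h1 : ∫⁻ z in ball x r, F (x + t • (z - x)) =
      ∫⁻ w in ball (0 : E) r, F (x + t • w) := by
    have := aux_transl (fun z => F (x + t • (z - x))) hFz x r
    simpa using this
  have hind : Measurable fun v : E => (ball (0 : E) (t * r)).indicator (fun v => F (x + v)) v :=
    ((hF.comp (measurable_const.add measurable_id)).indicator measurableSet_ball)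
  have h2 : ∀ w : E, (ball (0 : E) r).indicator (fun w => F (x + t • w)) w
      = (ball (0 : E) (t * r)).indicator (fun v => F (x + v)) (t • w) := by
    intro w
    have hmem : w ∈ ball (0 : E) r ↔ t • w ∈ ball (0 : E) (t * r) := by
      simp only [mem_ball, dist_zero_right, norm_smul, Real.norm_eq_abs, abs_of_pos ht]
      constructor
      · intro h; exact (mul_lt_mul_iff_right₀ ht).2 h
      · intro h; exact (mul_lt_mul_iff_right₀ ht).1 h
    by_cases hw : w ∈ ball (0 : E) r
    · rw [indicator_of_mem hw, indicator_of_mem (hmem.1 hw)]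
    · rw [indicator_of_notMem hw, indicator_of_notMem (fun hc => hw (hmem.2 hc))]
  have h3 : ∫⁻ w in ball (0 : E) r, F (x + t • w) =
      ∫⁻ w, (ball (0 : E) (t * r)).indicator (fun v => F (x + v)) (t • w) := by
    rw [← lintegral_indicator measurableSet_ball]
    congr 1
    ext w
    exact h2 w
  have hfinrank : Module.finrank ℝ (E) = d := finrank_euclideanSpace_fin
  have h4 : ∫⁻ w, (ball (0 : E) (t * r)).indicator (fun v => F (x + v)) (t • w) ∂volume
      = ENNReal.ofReal ((t ^ d)⁻¹) *
        ∫⁻ v, (ball (0 : E) (t * r)).indicator (fun v => F (x + v)) v ∂volume := by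
    have hmap := MeasureTheory.Measure.map_addHaar_smul (volume : Measure E) (ne_of_gt ht)
    calc ∫⁻ w, (ball (0 : E) (t * r)).indicator (fun v => F (x + v)) (t • w) ∂volume
        = ∫⁻ v, (ball (0 : E) (t * r)).indicator (fun v => F (x + v)) v
            ∂(Measure.map (t • ·) volume) :=
          (lintegral_map hind (measurable_const_smul t)).symm
      _ = _ := by
          rw [hmap, hfinrank]
          rw [lintegral_smul_measure]
          congr 2
          rw [abs_of_nonneg (by positivity)]
  have h5 : ∫⁻ v, (ball (0 : E) (t * r)).indicator (fun v => F (x + v)) v ∂volume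
      = ∫⁻ w in ball x (t * r), F w := by
    rw [lintegral_indicator measurableSet_ball]
    exact (aux_transl F hF x (t * r)).symm
  rw [h1, h3, h4, h5]

lemma aux_core (hd : 0 < d) (u : (E) → ℝ) (hu : Differentiable ℝ u) {C : ℝ≥0∞} (x : E)
    (hC : ∀ ρ : ℝ, 0 < ρ →
      (∫⁻ z in ball x ρ, (‖fderiv ℝ u z‖₊ : ℝ≥0∞)) ≤ volume (ball x ρ) * C)
    {r : ℝ} (hr : 0 < r) :
    ∫⁻ z in ball x r, (‖u x - u z‖₊ : ℝ≥0∞) ≤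
      ENNReal.ofReal r * (volume (ball x r) * C) := by
  haveI : Nonempty (Fin d) := ⟨⟨0, hd⟩⟩
  haveI hnt : Nontrivial (E) := inferInstance
  set F : (E) → ℝ≥0∞ := fun v => (‖fderiv ℝ u v‖₊ : ℝ≥0∞) with hFdef
  have hF : Measurable F := by
    apply Measurable.coe_nnreal_ennreal
    exact (measurable_fderiv ℝ u).nnnorm
  have hFz : Measurable (Function.uncurry fun (z : E) (t : ℝ) => F (x + t • (z - x))) := by
    apply hF.comp
    exact measurable_const.add ((measurable_snd.smul (measurable_fst.sub measurable_const)))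
  -- step 1: pointwise segment bound with r
  have step1 : ∀ z ∈ ball x r, (‖u x - u z‖₊ : ℝ≥0∞) ≤
      (∫⁻ t in Icc (0:ℝ) 1, F (x + t • (z - x))) * ENNReal.ofReal r := by
    intro z hz
    refine (aux_seg u hu x z).trans ?_
    rw [← lintegral_mul_const' (ENNReal.ofReal r) _ ENNReal.ofReal_ne_top]
    refine lintegral_mono fun t => ?_
    refine mul_le_mul_right ?_ _
    refine (ofReal_norm (z - x)).symm.trans_le ?_
    apply ENNReal.ofReal_le_ofReal
    rw [← dist_eq_norm]
    exact le_of_lt (mem_ball.1 hz)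
  -- step 2: integrate over the ball and swap
  have hmeas_inner : Measurable fun z : E => ∫⁻ t in Icc (0:ℝ) 1, F (x + t • (z - x)) := by
    apply Measurable.lintegral_prod_right (f := fun (z : E) (t : ℝ) => F (x + t • (z - x)))
    exact hFz
  have step2 : ∫⁻ z in ball x r, (‖u x - u z‖₊ : ℝ≥0∞) ≤
      (∫⁻ t in Icc (0:ℝ) 1, ∫⁻ z in ball x r, F (x + t • (z - x))) * ENNReal.ofReal r := by
    have swap : ∫⁻ z in ball x r, ∫⁻ t in Icc (0:ℝ) 1, F (x + t • (z - x)) =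
        ∫⁻ t in Icc (0:ℝ) 1, ∫⁻ z in ball x r, F (x + t • (z - x)) := by
      apply lintegral_lintegral_swap
      exact hFz.aemeasurable
    rw [← swap, ← lintegral_mul_const' (ENNReal.ofReal r) _ ENNReal.ofReal_ne_top]
    exact setLIntegral_mono' measurableSet_ball step1
  -- step 3: bound the inner integral for a.e. t
  have step3 : ∫⁻ t in Icc (0:ℝ) 1, ∫⁻ z in ball x r, F (x + t • (z - x)) ≤
      volume (ball x r) * C := by
    have hbound : ∀ t ∈ Ioc (0:ℝ) 1,
        (∫⁻ z in ball x r, F (x + t • (z - x))) ≤ volume (ball x r) * C := by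
      intro t ht
      rw [aux_scale F hF x ht.1]
      have h1 : ∫⁻ w in ball x (t * r), F w ≤ volume (ball x (t * r)) * C :=
        hC _ (mul_pos ht.1 hr)
      have h2 : volume (ball x (t * r)) =
          ENNReal.ofReal (t ^ d) * volume (ball x r) := by
        rw [Measure.addHaar_ball_mul volume x (le_of_lt ht.1) r,
          finrank_euclideanSpace_fin, ← Measure.addHaar_ball_center volume x r]
      calc ENNReal.ofReal ((t ^ d)⁻¹) * ∫⁻ w in ball x (t * r), F w
          ≤ ENNReal.ofReal ((t ^ d)⁻¹) * (ENNReal.ofReal (t ^ d) * (volume (ball x r) * C)) := by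
            rw [h2] at h1
            exact mul_le_mul_right (h1.trans_eq (mul_assoc _ _ _)) _
        _ = (ENNReal.ofReal ((t ^ d)⁻¹) * ENNReal.ofReal (t ^ d)) * (volume (ball x r) * C) := by
            ring
        _ = volume (ball x r) * C := by
            have htd : (0:ℝ) < t ^ d := pow_pos ht.1 d
            rw [← ENNReal.ofReal_mul (le_of_lt (inv_pos.2 htd)), inv_mul_cancel₀ (ne_of_gt htd),
              ENNReal.ofReal_one, one_mul]
    calc ∫⁻ t in Icc (0:ℝ) 1, ∫⁻ z in ball x r, F (x + t • (z - x))
        ≤ ∫⁻ _ in Icc (0:ℝ) 1, volume (ball x r) * C := by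
          apply setLIntegral_mono_ae' measurableSet_Icc
          have h0 : ∀ᵐ t : ℝ ∂(volume : Measure ℝ), t ≠ 0 := by
            rw [ae_iff]
            simp only [not_not, Set.setOf_eq_eq_singleton]
            exact measure_singleton 0
          filter_upwards [h0] with t ht0 hmem
          exact hbound t ⟨lt_of_le_of_ne hmem.1 (Ne.symm ht0), hmem.2⟩
      _ ≤ volume (ball x r) * C := by
          rw [setLIntegral_const, Real.volume_Icc]
          simp
  calc ∫⁻ z in ball x r, (‖u x - u z‖₊ : ℝ≥0∞)
      ≤ (∫⁻ t in Icc (0:ℝ) 1, ∫⁻ z in ball x r, F (x + t • (z - x))) * ENNReal.ofReal r := step2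
    _ ≤ (volume (ball x r) * C) * ENNReal.ofReal r := mul_le_mul_left step3 _
    _ = ENNReal.ofReal r * (volume (ball x r) * C) := mul_comm _ _

lemma aux_avg {α : Type*} [MeasurableSpace α] (μ : Measure α) (f : α → ℝ) (hf : ∀ a, 0 ≤ f a)
    (s : Set α) (h0 : μ s ≠ 0) (htop : μ s ≠ ∞) (hint : IntegrableOn f s μ) :
    ENNReal.ofReal (⨍ z in s, f z ∂μ) = (μ s)⁻¹ * ∫⁻ z in s, (‖f z‖₊ : ℝ≥0∞) ∂μ := by
  rw [setAverage_eq, smul_eq_mul, ENNReal.ofReal_mul (by positivity)]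
  have h1 : ENNReal.ofReal ((μ.real s)⁻¹) = (μ s)⁻¹ := by
    rw [measureReal_def, ENNReal.ofReal_inv_of_pos (ENNReal.toReal_pos h0 htop), ENNReal.ofReal_toReal htop]
  have h2 : ENNReal.ofReal (∫ z in s, f z ∂μ) = ∫⁻ z in s, (‖f z‖₊ : ℝ≥0∞) ∂μ := by
    rw [ofReal_integral_eq_lintegral_ofReal hint (ae_of_all _ hf)]
    congr 1
    ext z
    exact (congrArg ENNReal.ofReal (Real.norm_of_nonneg (hf z))).symm.trans (ofReal_norm (f z))
  rw [h1, h2]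

lemma aux_avg_nonneg {α : Type*} [MeasurableSpace α] (μ : Measure α) (f : α → ℝ)
    (hf : ∀ a, 0 ≤ f a) (s : Set α) : 0 ≤ ⨍ z in s, f z ∂μ := by
  rw [setAverage_eq, smul_eq_mul]
  have : 0 ≤ ∫ z in s, f z ∂μ := integral_nonneg hf
  positivity

lemma aux_tail (p : ℝ≥0∞) (hp : 1 ≤ p) (f : (E) → ℝ)
    (hfm : AEStronglyMeasurable f volume) (x : E) {δ r : ℝ} (hδ : 0 < δ) (hδr : δ ≤ r) :
    ∫⁻ z in ball x r, (‖f z‖₊ : ℝ≥0∞) ≤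
      volume (ball x r) *
        (eLpNorm f p volume * (volume (ball x δ)) ^ (-(1 / p.toReal))) := by
  have hr : 0 < r := lt_of_lt_of_le hδ hδr
  have hv0 : volume (ball x r) ≠ 0 := (measure_ball_pos volume x hr).ne'
  have hvt : volume (ball x r) ≠ ∞ := measure_ball_lt_top.ne
  have hd0 : volume (ball x δ) ≠ 0 := (measure_ball_pos volume x hδ).ne'
  have hdt : volume (ball x δ) ≠ ∞ := measure_ball_lt_top.ne
  have h1 : ∫⁻ z in ball x r, (‖f z‖₊ : ℝ≥0∞) = eLpNorm f 1 (volume.restrict (ball x r)) := by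
    rw [eLpNorm_one_eq_lintegral_enorm]
    rfl
  have h2 := eLpNorm_le_eLpNorm_mul_rpow_measure_univ (p := 1) (q := p) hp (μ := volume.restrict (ball x r)) (hfm.restrict (s := ball x r))
  rw [Measure.restrict_apply_univ] at h2
  have h3 : eLpNorm f p (volume.restrict (ball x r)) ≤ eLpNorm f p volume :=
    eLpNorm_mono_measure f Measure.restrict_le_self
  have hexp : 1 / (1 : ℝ≥0∞).toReal - 1 / p.toReal = 1 + -(1 / p.toReal) := by
    simp only [ENNReal.toReal_one]
    ring
  have h4 : volume (ball x r) ^ (1 + -(1 / p.toReal)) =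
      volume (ball x r) * volume (ball x r) ^ (-(1 / p.toReal)) := by
    rw [ENNReal.rpow_add _ _ hv0 hvt, ENNReal.rpow_one]
  have h5 : volume (ball x r) ^ (-(1 / p.toReal)) ≤ volume (ball x δ) ^ (-(1 / p.toReal)) := by
    rw [ENNReal.rpow_neg, ENNReal.rpow_neg]
    rw [ENNReal.inv_le_inv]
    exact ENNReal.rpow_le_rpow (measure_mono (ball_subset_ball hδr)) (by positivity)
  calc ∫⁻ z in ball x r, (‖f z‖₊ : ℝ≥0∞)
      = eLpNorm f 1 (volume.restrict (ball x r)) := h1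
    _ ≤ eLpNorm f p (volume.restrict (ball x r)) *
          volume (ball x r) ^ (1 / (1 : ℝ≥0∞).toReal - 1 / p.toReal) := h2
    _ ≤ eLpNorm f p volume *
          (volume (ball x r) * volume (ball x δ) ^ (-(1 / p.toReal))) := by
        rw [hexp, h4]
        exact mul_le_mul h3 (mul_le_mul_right h5 _) zero_le zero_le
    _ = volume (ball x r) *
          (eLpNorm f p volume * volume (ball x δ) ^ (-(1 / p.toReal))) := by ring

lemma aux_ae_fin (hd : 0 < d) (p : ℝ≥0∞) (hp : 1 ≤ p) (f : (E) → ℝ)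
    (hnn : ∀ a, 0 ≤ f a) (hf : MemLp f p volume) :
    ∀ᵐ x : E ∂volume, ∃ K : ℝ≥0∞, K ≠ ∞ ∧ ∀ r : ℝ, 0 < r →
      ∫⁻ z in ball x r, (‖f z‖₊ : ℝ≥0∞) ≤ volume (ball x r) * K := by
  haveI : Nonempty (Fin d) := ⟨⟨0, hd⟩⟩
  haveI : Nontrivial (E) := inferInstance
  have hloc : LocallyIntegrable f volume := hf.locallyIntegrable hp
  have hleb := IsUnifLocDoublingMeasure.ae_tendsto_average (μ := (volume : Measure E)) hloc 1
  filter_upwards [hleb] with x hx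
  have ht : Filter.Tendsto (fun r : ℝ => ⨍ y in closedBall x r, f y ∂volume)
      (nhdsWithin 0 (Ioi 0)) (nhds (f x)) := by
    apply hx (fun _ => x) id
    · exact Filter.tendsto_id
    · filter_upwards [self_mem_nhdsWithin] with r hr
      exact mem_closedBall_self (by simpa using le_of_lt (mem_Ioi.1 hr))
  have hev : ∀ᶠ r in nhdsWithin (0:ℝ) (Ioi 0),
      ⨍ y in closedBall x r, f y ∂volume < f x + 1 :=
    ht.eventually (Filter.Tendsto.eventually_lt_const (lt_add_one (f x)) Filter.tendsto_id)
  obtain ⟨δ, hδ0, hδ⟩ := (nhdsGT_basis (0:ℝ)).eventually_iff.1 hev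
  set Λ : ℝ≥0∞ := eLpNorm f p volume with hΛdef
  have hΛ : Λ ≠ ∞ := hf.2.ne
  set K2 : ℝ≥0∞ := Λ * (volume (ball x (δ/2))) ^ (-(1 / p.toReal)) with hK2def
  have hvd0 : volume (ball x (δ/2)) ≠ 0 := (measure_ball_pos volume x (by positivity)).ne'
  have hvdt : volume (ball x (δ/2)) ≠ ∞ := measure_ball_lt_top.ne
  have hK2 : K2 ≠ ∞ := by
    apply ENNReal.mul_ne_top hΛ
    have hpos : (0:ℝ≥0∞) < volume (ball x (δ/2)) ^ (1/p.toReal) :=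
      ENNReal.rpow_pos (lt_of_le_of_ne zero_le (Ne.symm hvd0)) hvdt
    rw [ENNReal.rpow_neg]
    exact ENNReal.inv_ne_top.2 hpos.ne'
  refine ⟨max (ENNReal.ofReal (f x + 1)) K2, ?_, ?_⟩
  · simp [hK2, ENNReal.ofReal_ne_top]
  · intro r hr
    rcases le_or_gt (δ/2) r with hcase | hcase
    · -- tail case
      refine (aux_tail p hp f hf.1 x (by positivity) hcase).trans ?_
      exact mul_le_mul_right (le_max_right _ _) _
    · -- small case
      have hrδ : r < δ := by linarith
      have havg : ⨍ y in closedBall x r, f y ∂volume < f x + 1 := hδ ⟨hr, hrδ⟩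
      have hc0 : volume (closedBall x r) ≠ 0 := fun h =>
        (measure_ball_pos volume x hr).ne'
          (le_antisymm (h ▸ measure_mono ball_subset_closedBall) zero_le)
      have hct : volume (closedBall x r) ≠ ∞ := (measure_closedBall_lt_top).ne
      have hint : IntegrableOn f (closedBall x r) volume :=
        hloc.integrableOn_isCompact (isCompact_closedBall x r)
      have heq := aux_avg volume f hnn (closedBall x r) hc0 hct hint
      have hICB : ∫⁻ z in closedBall x r, (‖f z‖₊ : ℝ≥0∞) ≤
          volume (closedBall x r) * ENNReal.ofReal (f x + 1) := by
        have h1 : (volume (closedBall x r))⁻¹ * ∫⁻ z in closedBall x r, (‖f z‖₊ : ℝ≥0∞) ≤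
            ENNReal.ofReal (f x + 1) := by
          rw [← heq]
          exact ENNReal.ofReal_le_ofReal (le_of_lt havg)
        calc ∫⁻ z in closedBall x r, (‖f z‖₊ : ℝ≥0∞)
            = volume (closedBall x r) *
              ((volume (closedBall x r))⁻¹ * ∫⁻ z in closedBall x r, (‖f z‖₊ : ℝ≥0∞)) := by
              rw [← mul_assoc, ENNReal.mul_inv_cancel hc0 hct, one_mul]
          _ ≤ _ := mul_le_mul_right h1 _
      have hCBeq : volume (closedBall x r) = volume (ball x r) :=
        Measure.addHaar_closedBall_eq_addHaar_ball (μ := (volume : Measure E)) x r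
      calc ∫⁻ z in ball x r, (‖f z‖₊ : ℝ≥0∞)
          ≤ ∫⁻ z in closedBall x r, (‖f z‖₊ : ℝ≥0∞) := lintegral_mono_set ball_subset_closedBall
        _ ≤ volume (closedBall x r) * ENNReal.ofReal (f x + 1) := hICB
        _ = volume (ball x r) * ENNReal.ofReal (f x + 1) := by rw [hCBeq]
        _ ≤ volume (ball x r) * max (ENNReal.ofReal (f x + 1)) K2 :=
            mul_le_mul_right (le_max_left _ _) _

/-- Pointwise Sobolev estimate via the Hardy–Littlewood maximal function: for
`u ∈ W^{1,p}(ℝ^d)` there is a Lebesgue-null set `N` with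
`|u x - u y| ≤ c |x - y| (M_{|∇u|}(x) + M_{|∇u|}(y))` off `N`, where
`c = c(d) > 0` and `M_f(x) = sup_{r>0} ⨍_{B(x,r)} |f|`. -/
theorem stmt_16 (d : ℕ) (p : ENNReal) (hp : 1 ≤ p) :
    ∃ c : ℝ, 0 < c ∧
      ∀ u : EuclideanSpace ℝ (Fin d) → ℝ,
        Differentiable ℝ u → MemLp u p volume →
        MemLp (fun x => ‖fderiv ℝ u x‖) p volume →
        ∀ Mf : EuclideanSpace ℝ (Fin d) → ℝ,
          (∀ x, Mf x = ⨆ r : {r : ℝ // 0 < r},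
              ⨍ y in ball x (r : ℝ), ‖fderiv ℝ u y‖ ∂volume) →
          ∃ N : Set (EuclideanSpace ℝ (Fin d)), volume N = 0 ∧
            ∀ x ∉ N, ∀ y ∉ N, |u x - u y| ≤ c * ‖x - y‖ * (Mf x + Mf y) := by
  rcases Nat.eq_zero_or_pos d with rfl | hd
  · -- trivial case d = 0
    refine ⟨1, one_pos, fun u hu hm hm' Mf hMf => ⟨∅, measure_empty, ?_⟩⟩
    intro x _ y _
    have hxy : x = y := Subsingleton.elim x y
    subst hxy
    simp
  · haveI : Nonempty (Fin d) := ⟨⟨0, hd⟩⟩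
    haveI : Nontrivial (EuclideanSpace ℝ (Fin d)) := inferInstance
    refine ⟨2 ^ (d + 1), by positivity, fun u hu hm hm' Mf hMf => ?_⟩
    set f : EuclideanSpace ℝ (Fin d) → ℝ := fun z => ‖fderiv ℝ u z‖ with hfdef
    have hnn : ∀ a, 0 ≤ f a := fun a => norm_nonneg _
    have hloc : LocallyIntegrable f volume := hm'.locallyIntegrable hp
    have hintf : ∀ (x : EuclideanSpace ℝ (Fin d)) (r : ℝ), IntegrableOn f (ball x r) volume :=
      fun x r => (hloc.integrableOn_isCompact (isCompact_closedBall x r)).mono_set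
        ball_subset_closedBall
    have hnnnorm : ∀ z, (‖f z‖₊ : ℝ≥0∞) = (‖fderiv ℝ u z‖₊ : ℝ≥0∞) := fun z => by
      rw [hfdef]; rw [nnnorm_norm]
    -- the good set
    set Good : EuclideanSpace ℝ (Fin d) → Prop := fun x => ∀ r : ℝ, 0 < r →
      (∫⁻ z in ball x r, (‖fderiv ℝ u z‖₊ : ℝ≥0∞)) ≤
        volume (ball x r) * ENNReal.ofReal (Mf x) with hGdef
    have hMf0 : ∀ x, 0 ≤ Mf x := by
      intro x
      rw [hMf x]
      exact Real.iSup_nonneg fun ρ => aux_avg_nonneg volume _ (fun a => norm_nonneg _) _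
    have hae : ∀ᵐ x : EuclideanSpace ℝ (Fin d) ∂volume, Good x := by
      filter_upwards [aux_ae_fin hd p hp f hnn hm'] with x hx
      obtain ⟨K, hKt, hK⟩ := hx
      intro r hr
      have hv0 : volume (ball x r) ≠ 0 := (measure_ball_pos volume x hr).ne'
      have hvt : volume (ball x r) ≠ ∞ := measure_ball_lt_top.ne
      have havg_eq : ∀ ρ : ℝ, 0 < ρ → ENNReal.ofReal (⨍ y in ball x ρ, f y ∂volume) =
          (volume (ball x ρ))⁻¹ * ∫⁻ z in ball x ρ, (‖f z‖₊ : ℝ≥0∞) :=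
        fun ρ hρ => aux_avg volume f hnn _ (measure_ball_pos volume x hρ).ne'
          measure_ball_lt_top.ne (hintf x ρ)
      have hbdd : ∀ ρ : ℝ, 0 < ρ → (⨍ y in ball x ρ, f y ∂volume) ≤ K.toReal := by
        intro ρ hρ
        have h0 : volume (ball x ρ) ≠ 0 := (measure_ball_pos volume x hρ).ne'
        have ht : volume (ball x ρ) ≠ ∞ := measure_ball_lt_top.ne
        have h1 : ENNReal.ofReal (⨍ y in ball x ρ, f y ∂volume) ≤ K := by
          rw [havg_eq ρ hρ]
          calc (volume (ball x ρ))⁻¹ * ∫⁻ z in ball x ρ, (‖f z‖₊ : ℝ≥0∞)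
              ≤ (volume (ball x ρ))⁻¹ * (volume (ball x ρ) * K) :=
                mul_le_mul_right (hK ρ hρ) _
            _ = K := by rw [← mul_assoc, ENNReal.inv_mul_cancel h0 ht, one_mul]
        calc (⨍ y in ball x ρ, f y ∂volume)
            = (ENNReal.ofReal (⨍ y in ball x ρ, f y ∂volume)).toReal :=
              (ENNReal.toReal_ofReal (aux_avg_nonneg volume f hnn _)).symm
          _ ≤ K.toReal := ENNReal.toReal_mono hKt h1
      have hbddA : BddAbove (Set.range fun ρ : {ρ : ℝ // 0 < ρ} =>
          ⨍ y in ball x (ρ : ℝ), f y ∂volume) := by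
        refine ⟨K.toReal, ?_⟩
        rintro - ⟨ρ, rfl⟩
        exact hbdd ρ ρ.2
      have hle : (⨍ y in ball x r, f y ∂volume) ≤ Mf x := by
        rw [hMf x]
        exact le_ciSup hbddA ⟨r, hr⟩
      have key : (∫⁻ z in ball x r, (‖f z‖₊ : ℝ≥0∞)) ≤
          volume (ball x r) * ENNReal.ofReal (Mf x) := by
        calc (∫⁻ z in ball x r, (‖f z‖₊ : ℝ≥0∞))
            = volume (ball x r) *
              ((volume (ball x r))⁻¹ * ∫⁻ z in ball x r, (‖f z‖₊ : ℝ≥0∞)) := by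
              rw [← mul_assoc, ENNReal.mul_inv_cancel hv0 hvt, one_mul]
          _ = volume (ball x r) * ENNReal.ofReal (⨍ y in ball x r, f y ∂volume) := by
              rw [havg_eq r hr]
          _ ≤ volume (ball x r) * ENNReal.ofReal (Mf x) :=
              mul_le_mul_right (ENNReal.ofReal_le_ofReal hle) _
      calc (∫⁻ z in ball x r, (‖fderiv ℝ u z‖₊ : ℝ≥0∞))
          = (∫⁻ z in ball x r, (‖f z‖₊ : ℝ≥0∞)) := by
            apply lintegral_congr; intro z; rw [hnnnorm]
        _ ≤ volume (ball x r) * ENNReal.ofReal (Mf x) := key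
    refine ⟨{x | ¬ Good x}, ?_, ?_⟩
    · rw [← ae_iff] at *
      exact hae
    · intro x hxN y hyN
      simp only [mem_setOf_eq, not_not] at hxN hyN
      rcases eq_or_ne x y with rfl | hxy
      · simp [mul_comm]
      -- main case
      have hr : 0 < ‖x - y‖ := by
        rw [norm_sub_pos_iff]; exact hxy
      set r : ℝ := ‖x - y‖ with hrdef
      set B : Set (EuclideanSpace ℝ (Fin d)) := ball x r with hBdef
      have hv0 : volume B ≠ 0 := (measure_ball_pos volume x hr).ne'
      have hvt : volume B ≠ ∞ := measure_ball_lt_top.ne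
      have hvolpos : 0 < (volume B).toReal := ENNReal.toReal_pos hv0 hvt
      set avgB : ℝ := ⨍ z in B, u z ∂volume with havgBdef
      have hucont : Continuous u := hu.continuous
      have hintu : ∀ (w : EuclideanSpace ℝ (Fin d)) (ρ : ℝ),
          IntegrableOn u (ball w ρ) volume :=
        fun w ρ => (hucont.continuousOn.integrableOn_compact
          (isCompact_closedBall w ρ)).mono_set ball_subset_closedBall
      have habs_int : ∀ (w : EuclideanSpace ℝ (Fin d)) (ρ : ℝ),
          IntegrableOn (fun z => |u w - u z|) (ball w ρ) volume := by
        intro w ρ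
        have : Continuous fun z => |u w - u z| :=
          (continuous_const.sub hucont).abs
        exact (this.continuousOn.integrableOn_compact
          (isCompact_closedBall w ρ)).mono_set ball_subset_closedBall
      -- generic bound on set integrals of |u w - u ·| over balls centered at w
      have hkey : ∀ (w : EuclideanSpace ℝ (Fin d)) (hw : Good w) (ρ : ℝ) (hρ : 0 < ρ),
          ∫ z in ball w ρ, |u w - u z| ∂volume ≤
            ρ * ((volume (ball w ρ)).toReal * Mf w) := by
        intro w hw ρ hρ
        have hcore := aux_core hd u hu (C := ENNReal.ofReal (Mf w)) w hw hρ
        have hmeasg : AEStronglyMeasurable (fun z => u w - u z)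
            (volume.restrict (ball w ρ)) :=
          (continuous_const.sub hucont).aestronglyMeasurable.restrict
        have h1 : ∫ z in ball w ρ, |u w - u z| ∂volume =
            (∫⁻ z in ball w ρ, (‖u w - u z‖₊ : ℝ≥0∞)).toReal := by
          refine Eq.trans ?_ (integral_norm_eq_lintegral_enorm hmeasg)
          simp [Real.norm_eq_abs]
        rw [h1]
        have h2 : (∫⁻ z in ball w ρ, (‖u w - u z‖₊ : ℝ≥0∞)).toReal ≤
            (ENNReal.ofReal ρ * (volume (ball w ρ) * ENNReal.ofReal (Mf w))).toReal := by
          apply ENNReal.toReal_mono _ hcore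
          exact ENNReal.mul_ne_top ENNReal.ofReal_ne_top
            (ENNReal.mul_ne_top measure_ball_lt_top.ne ENNReal.ofReal_ne_top)
        refine h2.trans_eq ?_
        rw [ENNReal.toReal_mul, ENNReal.toReal_mul, ENNReal.toReal_ofReal (le_of_lt hρ),
          ENNReal.toReal_ofReal (hMf0 w)]
      -- estimate (i)
      have hi : |u x - avgB| ≤ r * Mf x := by
        have h_ux : u x - avgB = ⨍ z in B, (u x - u z) ∂volume := by
          rw [havgBdef, setAverage_eq, setAverage_eq, smul_eq_mul, smul_eq_mul,
            integral_sub (integrableOn_const (C := u x) measure_ball_lt_top.ne) (hintu x r),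
            setIntegral_const, smul_eq_mul]
          rw [← hBdef]
          have hvr : volume.real B ≠ 0 := hvolpos.ne'
          field_simp
        rw [h_ux, setAverage_eq, smul_eq_mul, abs_mul,
          abs_of_nonneg (inv_nonneg.2 measureReal_nonneg)]
        have habs : |∫ z in B, (u x - u z) ∂volume| ≤ ∫ z in B, |u x - u z| ∂volume := by
          simpa [Real.norm_eq_abs] using
            norm_integral_le_integral_norm (μ := volume.restrict B) (fun z => u x - u z)
        calc ((volume B).toReal)⁻¹ * |∫ z in B, (u x - u z) ∂volume|
            ≤ ((volume B).toReal)⁻¹ * (r * ((volume B).toReal * Mf x)) := by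
              apply mul_le_mul_of_nonneg_left _ (inv_nonneg.2 ENNReal.toReal_nonneg)
              exact habs.trans (hkey x hxN r hr)
          _ = r * Mf x := by field_simp
      -- estimate (ii)
      have hsub : B ⊆ ball y (2 * r) := by
        intro z hz
        rw [mem_ball] at hz ⊢
        have hxyd : dist x y = r := by rw [dist_eq_norm]
        calc dist z y ≤ dist z x + dist x y := dist_triangle _ _ _
          _ < r + r := by rw [hxyd]; exact add_lt_add_of_lt_of_le hz le_rfl
          _ = 2 * r := by ring
      have hvol2 : (volume (ball y (2 * r))).toReal = 2 ^ d * (volume B).toReal := by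
        have h1 : volume (ball y (2 * r)) = ENNReal.ofReal (2 ^ d) * volume B := by
          rw [Measure.addHaar_ball_mul volume y (by norm_num : (0:ℝ) ≤ 2) r,
            finrank_euclideanSpace_fin, hBdef, ← Measure.addHaar_ball_center volume x r]
        rw [h1, ENNReal.toReal_mul, ENNReal.toReal_ofReal (by positivity)]
      have hii : |u y - avgB| ≤ 2 ^ (d + 1) * r * Mf y := by
        have h_uy : u y - avgB = ⨍ z in B, (u y - u z) ∂volume := by
          rw [havgBdef, setAverage_eq, setAverage_eq, smul_eq_mul, smul_eq_mul,
            integral_sub (integrableOn_const (C := u y) measure_ball_lt_top.ne) (hintu x r),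
            setIntegral_const, smul_eq_mul]
          rw [← hBdef]
          have hvr : volume.real B ≠ 0 := hvolpos.ne'
          field_simp
        rw [h_uy, setAverage_eq, smul_eq_mul, abs_mul,
          abs_of_nonneg (inv_nonneg.2 measureReal_nonneg)]
        have habs : |∫ z in B, (u y - u z) ∂volume| ≤ ∫ z in B, |u y - u z| ∂volume := by
          simpa [Real.norm_eq_abs] using
            norm_integral_le_integral_norm (μ := volume.restrict B) (fun z => u y - u z)
        have hmono : ∫ z in B, |u y - u z| ∂volume ≤
            ∫ z in ball y (2 * r), |u y - u z| ∂volume := by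
          apply setIntegral_mono_set (habs_int y (2 * r))
          · exact ae_of_all _ fun z => abs_nonneg _
          · exact HasSubset.Subset.eventuallyLE hsub
        calc ((volume B).toReal)⁻¹ * |∫ z in B, (u y - u z) ∂volume|
            ≤ ((volume B).toReal)⁻¹ *
                ((2 * r) * ((volume (ball y (2 * r))).toReal * Mf y)) := by
              apply mul_le_mul_of_nonneg_left _ (inv_nonneg.2 ENNReal.toReal_nonneg)
              exact habs.trans (hmono.trans (hkey y hyN (2 * r) (by positivity)))
          _ = 2 ^ (d + 1) * r * Mf y := by
              rw [hvol2]
              field_simp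
              ring
      -- combine
      have htri : |u x - u y| ≤ |u x - avgB| + |u y - avgB| := by
        have := abs_sub_le (u x) avgB (u y)
        rwa [abs_sub_comm avgB (u y)] at this
      have h2d : (1:ℝ) ≤ 2 ^ (d + 1) := one_le_pow₀ (by norm_num)
      calc |u x - u y| ≤ |u x - avgB| + |u y - avgB| := htri
        _ ≤ r * Mf x + 2 ^ (d + 1) * r * Mf y := add_le_add hi hii
        _ ≤ 2 ^ (d + 1) * r * (Mf x + Mf y) := by
            have h1 : 0 ≤ Mf x := hMf0 x
            have h2 : 0 ≤ Mf y := hMf0 y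
            nlinarith [mul_nonneg (le_of_lt hr) h1]
        _ = 2 ^ (d + 1) * ‖x - y‖ * (Mf x + Mf y) := by rw [hrdef]
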